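/- Let V be a real vector space. On L = V ⊕ End(V) ⊕ V*, define a bracket by [(X,A,α),(Y,B,β)] = (A Y − B X, A∘B − B∘A + ⟨X,β⟩ − ⟨Y,α⟩, α∘B − β∘A), where for Z ∈ V and γ ∈ V*, ⟨Z,γ⟩ ∈ End(V) denotes the endomorphism W ↦ γ(Z)W + γ(W)Z. Then this bracket is bilinear, antisymmetric, and satisfies the Jacobi identity; i.e., it makes L into a Lie algebra. -/

import Mathlib

open LinearMap

/-- For `Z ∈ V` and `γ ∈ V*`, the endomorphism `⟨Z,γ⟩ : W ↦ γ(Z)•W + γ(W)•Z`. -/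
noncomputable def pairEnd {V : Type*} [AddCommGroup V] [Module ℝ V]
    (Z : V) (γ : V →ₗ[ℝ] ℝ) : Module.End ℝ V :=
  γ Z • LinearMap.id + LinearMap.smulRight γ Z

/-- The bracket on `L = V ⊕ End(V) ⊕ V*`:
`[(X,A,α),(Y,B,β)] = (A Y − B X, A∘B − B∘A + ⟨X,β⟩ − ⟨Y,α⟩, α∘B − β∘A)`. -/
noncomputable def bkt {V : Type*} [AddCommGroup V] [Module ℝ V]
    (p q : V × Module.End ℝ V × (V →ₗ[ℝ] ℝ)) :
    V × Module.End ℝ V × (V →ₗ[ℝ] ℝ) :=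
  (p.2.1 q.1 - q.2.1 p.1,
   p.2.1 * q.2.1 - q.2.1 * p.2.1 + pairEnd p.1 q.2.2 - pairEnd q.1 p.2.2,
   p.2.2 ∘ₗ q.2.1 - q.2.2 ∘ₗ p.2.1)

set_option maxHeartbeats 1000000 in
theorem bkt_isLieBracket {V : Type*} [AddCommGroup V] [Module ℝ V] :
    (∀ (c : ℝ) (p p' q : V × Module.End ℝ V × (V →ₗ[ℝ] ℝ)),
        bkt (c • p + p') q = c • bkt p q + bkt p' q) ∧
    (∀ (c : ℝ) (p q q' : V × Module.End ℝ V × (V →ₗ[ℝ] ℝ)),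
        bkt p (c • q + q') = c • bkt p q + bkt p q') ∧
    (∀ p q : V × Module.End ℝ V × (V →ₗ[ℝ] ℝ), bkt p q = - bkt q p) ∧
    (∀ p q r : V × Module.End ℝ V × (V →ₗ[ℝ] ℝ),
        bkt (bkt p q) r + bkt (bkt q r) p + bkt (bkt r p) q = 0) := by
  refine ⟨?_, ?_, ?_, ?_⟩ <;> intros <;>
    refine Prod.ext ?_ (Prod.ext (LinearMap.ext fun w => ?_) (LinearMap.ext fun w => ?_)) <;>
    simp only [bkt, pairEnd, Prod.smul_def, Prod.fst_add, Prod.snd_add, Prod.smul_fst,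
      Prod.smul_snd, Prod.fst_neg, Prod.snd_neg,
      LinearMap.add_apply, LinearMap.sub_apply, LinearMap.neg_apply, LinearMap.smul_apply,
      LinearMap.comp_apply, Module.End.mul_apply, LinearMap.id_apply, LinearMap.smulRight_apply,
      map_add, map_sub, map_smul, map_neg, smul_eq_mul,
      Prod.mk_add_mk, Prod.smul_mk, Prod.neg_mk, Prod.zero_eq_mk, Prod.mk_eq_zero,
      LinearMap.zero_apply] <;>
    first | module | ring
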